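/- Let M be symmetric positive definite d×d, u(q) = (M + diag(q))^{-1} v, and ∇G(q₂) = −(M + diag(q₂))^{-1} diag(u(q₂)). Suppose for q₁, q₂ in a set F, λ_min(M + diag(q)) ≥ c > 0 for all q ∈ F and the entries of u(q) are bounded by C₂. Then |u(q₁) − u(q₂) − ∇G(q₂)(q₁ − q₂)| ≤ (C₂/c²)|q₁ − q₂|², where |·| is the Euclidean norm. -/

import Mathlib

open Matrix

/-- Euclidean norm on `ℝ^d`. -/
noncomputable def enorm8 {d : ℕ} (x : Fin d → ℝ) : ℝ := Real.sqrt (∑ i, x i ^ 2)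

/-- `u(q) = (M + diag(q))⁻¹ v`. -/
noncomputable def uSol {d : ℕ} (M : Matrix (Fin d) (Fin d) ℝ) (v : Fin d → ℝ)
    (q : Fin d → ℝ) : Fin d → ℝ :=
  (M + Matrix.diagonal q)⁻¹ *ᵥ v

/-- The Jacobian `∇G(q) = −(M + diag(q))⁻¹ diag(u(q))`. -/
noncomputable def DG {d : ℕ} (M : Matrix (Fin d) (Fin d) ℝ) (v : Fin d → ℝ)
    (q : Fin d → ℝ) : Matrix (Fin d) (Fin d) ℝ :=
  -(M + Matrix.diagonal q)⁻¹ * Matrix.diagonal (uSol M v q)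

lemma enorm8_sum_nonneg {d : ℕ} (x : Fin d → ℝ) : 0 ≤ ∑ i, x i ^ 2 :=
  Finset.sum_nonneg fun _ _ => sq_nonneg _

lemma enorm8_nonneg {d : ℕ} (x : Fin d → ℝ) : 0 ≤ enorm8 x := Real.sqrt_nonneg _

lemma mulVec_lower8 {d : ℕ} {A : Matrix (Fin d) (Fin d) ℝ} (hA : A.IsHermitian)
    {c : ℝ} (hc : 0 < c) (hspec : ∀ μ ∈ spectrum ℝ A, c ≤ μ) (x : Fin d → ℝ) :
    c * enorm8 x ≤ enorm8 (A *ᵥ x) := by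
  unfold enorm8
  set B : Matrix (Fin d) (Fin d) ℝ := A - algebraMap ℝ _ c with hB
  have hBh : B.IsHermitian := by
    rw [hB, Matrix.algebraMap_eq_diagonal]
    exact hA.sub (Matrix.isHermitian_diagonal _)
  have hpsd : B.PosSemidef := by
    refine hBh.posSemidef_iff_eigenvalues_nonneg.2 (fun i => ?_ : ∀ i, 0 ≤ hBh.eigenvalues i)
    have hmem : hBh.eigenvalues i ∈ spectrum ℝ B := hBh.eigenvalues_mem_spectrum_real i
    have : hBh.eigenvalues i + c ∈ spectrum ℝ A := by
      have := (spectrum.add_mem_add_iff (a := B) (r := hBh.eigenvalues i) (s := c)).2 hmem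
      simpa [hB] using this
    linarith [hspec _ this]
  have key : c * ∑ i, x i ^ 2 ≤ x ⬝ᵥ (A *ᵥ x) := by
    have h0 := hpsd.dotProduct_mulVec_nonneg x
    simp only [RCLike.re_to_real, star_trivial] at h0
    have hBx : B *ᵥ x = A *ᵥ x - c • x := by
      funext i
      simp [hB, Matrix.sub_mulVec, Matrix.algebraMap_eq_diagonal, Matrix.mulVec_diagonal]
    rw [hBx, dotProduct_sub, dotProduct_smul] at h0
    have hxx : x ⬝ᵥ x = ∑ i, x i ^ 2 := by simp [dotProduct, pow_two]
    rw [hxx] at h0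
    simpa [smul_eq_mul] using h0
  have hCS : x ⬝ᵥ (A *ᵥ x) ≤
      Real.sqrt (∑ i, x i ^ 2) * Real.sqrt (∑ i, (A *ᵥ x) i ^ 2) :=
    Real.sum_mul_le_sqrt_mul_sqrt Finset.univ x (A *ᵥ x)
  set s := Real.sqrt (∑ i, x i ^ 2) with hs
  set t := Real.sqrt (∑ i, (A *ᵥ x) i ^ 2) with ht
  have hs0 : 0 ≤ s := Real.sqrt_nonneg _
  have ht0 : 0 ≤ t := Real.sqrt_nonneg _
  have hs2 : s ^ 2 = ∑ i, x i ^ 2 := Real.sq_sqrt (enorm8_sum_nonneg x)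
  rcases eq_or_lt_of_le hs0 with h | h
  · simp [← h]; positivity
  · nlinarith [key, hCS]

lemma inv_mulVec_le8 {d : ℕ} {A : Matrix (Fin d) (Fin d) ℝ} (hA : A.IsHermitian)
    {c : ℝ} (hc : 0 < c) (hspec : ∀ μ ∈ spectrum ℝ A, c ≤ μ) (y : Fin d → ℝ) :
    enorm8 (A⁻¹ *ᵥ y) ≤ (1 / c) * enorm8 y := by
  have hu : IsUnit A :=
    spectrum.isUnit_of_zero_notMem ℝ (fun h => absurd (hspec 0 h) (by linarith))
  have hdet : IsUnit A.det := (Matrix.isUnit_iff_isUnit_det A).1 hu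
  have h := mulVec_lower8 hA hc hspec (A⁻¹ *ᵥ y)
  rw [Matrix.mulVec_mulVec, Matrix.mul_nonsing_inv _ hdet, Matrix.one_mulVec] at h
  rw [one_div, mul_comm, ← div_eq_mul_inv, le_div_iff₀ hc]
  linarith

lemma diag_mulVec_le8 {d : ℕ} (w x : Fin d → ℝ) :
    enorm8 (Matrix.diagonal w *ᵥ x) ≤ enorm8 w * enorm8 x := by
  unfold enorm8
  rw [← Real.sqrt_mul (enorm8_sum_nonneg w)]
  apply Real.sqrt_le_sqrt
  calc ∑ i, (Matrix.diagonal w *ᵥ x) i ^ 2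
      ≤ ∑ i, (∑ j, w j ^ 2) * x i ^ 2 := by
        refine Finset.sum_le_sum fun i _ => ?_
        have h1 : (Matrix.diagonal w *ᵥ x) i = w i * x i := Matrix.mulVec_diagonal w x i
        have h2 : w i ^ 2 ≤ ∑ j, w j ^ 2 :=
          Finset.single_le_sum (f := fun j => w j ^ 2) (fun j _ => sq_nonneg _)
            (Finset.mem_univ i)
        rw [h1, mul_pow]
        exact mul_le_mul_of_nonneg_right h2 (sq_nonneg _)
    _ = (∑ j, w j ^ 2) * ∑ i, x i ^ 2 := by rw [← Finset.mul_sum]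

lemma diag_mulVec_le8' {d : ℕ} {C : ℝ} (hC : 0 ≤ C) (w x : Fin d → ℝ)
    (hx : ∀ i, |x i| ≤ C) :
    enorm8 (Matrix.diagonal w *ᵥ x) ≤ C * enorm8 w := by
  unfold enorm8
  have : C * Real.sqrt (∑ i, w i ^ 2) = Real.sqrt (C ^ 2 * ∑ i, w i ^ 2) := by
    rw [Real.sqrt_mul (sq_nonneg C), Real.sqrt_sq hC]
  rw [this]
  apply Real.sqrt_le_sqrt
  rw [Finset.mul_sum]
  apply Finset.sum_le_sum
  intro i _
  have h1 : (Matrix.diagonal w *ᵥ x) i = w i * x i := Matrix.mulVec_diagonal w x i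
  have h2 : x i ^ 2 ≤ C ^ 2 := by
    have := hx i
    nlinarith [abs_nonneg (x i), sq_abs (x i)]
  rw [h1, mul_pow]
  nlinarith [sq_nonneg (w i)]

/-- Second-order Taylor remainder bound:
`|u(q₁) − u(q₂) − ∇G(q₂)(q₁ − q₂)| ≤ (C₂/c²)|q₁ − q₂|²`. -/
theorem stmt8 {d : ℕ} (M : Matrix (Fin d) (Fin d) ℝ) (v : Fin d → ℝ)
    (hM : M.PosDef) (F : Set (Fin d → ℝ)) (c C₂ : ℝ) (hc : 0 < c)
    (heig : ∀ q ∈ F, ∀ μ ∈ spectrum ℝ (M + Matrix.diagonal q), c ≤ μ)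
    (hbound : ∀ q ∈ F, ∀ i, |uSol M v q i| ≤ C₂) :
    ∀ q₁ ∈ F, ∀ q₂ ∈ F,
      enorm8 (uSol M v q₁ - uSol M v q₂ - DG M v q₂ *ᵥ (q₁ - q₂)) ≤
        (C₂ / c ^ 2) * enorm8 (q₁ - q₂) ^ 2 := by
  intro q₁ hq₁ q₂ hq₂
  rcases Nat.eq_zero_or_pos d with hd | hd
  · have : IsEmpty (Fin d) := by rw [hd]; exact Fin.isEmpty'
    simp [enorm8, Finset.univ_eq_empty]
  have hC₂ : 0 ≤ C₂ := le_trans (abs_nonneg _) (hbound q₂ hq₂ ⟨0, hd⟩)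
  set A₁ := M + Matrix.diagonal q₁ with hA₁
  set A₂ := M + Matrix.diagonal q₂ with hA₂
  set δ := q₁ - q₂ with hδdef
  have hA₁h : A₁.IsHermitian := hM.1.add (Matrix.isHermitian_diagonal _)
  have hA₂h : A₂.IsHermitian := hM.1.add (Matrix.isHermitian_diagonal _)
  have hs₁ := heig q₁ hq₁
  have hs₂ := heig q₂ hq₂
  have hu₁ : IsUnit A₁ :=
    spectrum.isUnit_of_zero_notMem ℝ (fun h => absurd (hs₁ 0 h) (by linarith))
  have hu₂ : IsUnit A₂ :=
    spectrum.isUnit_of_zero_notMem ℝ (fun h => absurd (hs₂ 0 h) (by linarith))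
  have hdet₁ : IsUnit A₁.det := (Matrix.isUnit_iff_isUnit_det A₁).1 hu₁
  have hdet₂ : IsUnit A₂.det := (Matrix.isUnit_iff_isUnit_det A₂).1 hu₂
  set u₂ := uSol M v q₂ with hu₂def
  set w := Matrix.diagonal δ *ᵥ u₂ with hwdef
  have hdiff : A₁ - A₂ = Matrix.diagonal δ := by
    rw [hA₁, hA₂, hδdef]
    ext i j
    simp only [Matrix.sub_apply, Matrix.add_apply, Matrix.diagonal_apply, Pi.sub_apply]
    split_ifs <;> ring
  have hid : A₂⁻¹ - A₁⁻¹ = A₁⁻¹ * Matrix.diagonal δ * A₂⁻¹ := by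
    rw [← hdiff, Matrix.mul_sub, Matrix.sub_mul, Matrix.nonsing_inv_mul _ hdet₁, one_mul,
      Matrix.mul_assoc, Matrix.mul_nonsing_inv _ hdet₂, mul_one]
  have hstep : ∀ y : Fin d → ℝ,
      (A₂⁻¹ - A₁⁻¹) *ᵥ y = A₁⁻¹ *ᵥ (Matrix.diagonal δ *ᵥ (A₂⁻¹ *ᵥ y)) := by
    intro y
    rw [hid, Matrix.mulVec_mulVec, Matrix.mulVec_mulVec, Matrix.mul_assoc]
  have hdw : Matrix.diagonal u₂ *ᵥ δ = w := by
    funext i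
    simp [hwdef, Matrix.mulVec_diagonal, mul_comm]
  have hDGeq : DG M v q₂ = -(A₂⁻¹ * Matrix.diagonal u₂) := by
    rw [DG, neg_mul]
  have hDG : DG M v q₂ *ᵥ δ = -(A₂⁻¹ *ᵥ w) := by
    rw [hDGeq, Matrix.neg_mulVec, ← Matrix.mulVec_mulVec, hdw]
  have hu12 : uSol M v q₁ - u₂ = -(A₁⁻¹ *ᵥ w) := by
    have h1 : u₂ - uSol M v q₁ = (A₂⁻¹ - A₁⁻¹) *ᵥ v := by
      rw [Matrix.sub_mulVec]
      rfl
    have h2 : (A₂⁻¹ - A₁⁻¹) *ᵥ v = A₁⁻¹ *ᵥ w := by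
      rw [hstep v]
      congr 1
    have h3 : u₂ - uSol M v q₁ = A₁⁻¹ *ᵥ w := h1.trans h2
    linear_combination (norm := abel) -h3
  have hR : uSol M v q₁ - u₂ - DG M v q₂ *ᵥ δ
      = A₁⁻¹ *ᵥ (Matrix.diagonal δ *ᵥ (A₂⁻¹ *ᵥ w)) := by
    rw [hu12, hDG, ← hstep w, Matrix.sub_mulVec]
    abel
  rw [hR]
  have b1 := inv_mulVec_le8 hA₁h hc hs₁ (Matrix.diagonal δ *ᵥ (A₂⁻¹ *ᵥ w))
  have b2 := diag_mulVec_le8 δ (A₂⁻¹ *ᵥ w)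
  have b3 := inv_mulVec_le8 hA₂h hc hs₂ w
  have b4 : enorm8 w ≤ C₂ * enorm8 δ := diag_mulVec_le8' hC₂ δ u₂ (hbound q₂ hq₂)
  have e0 : 0 ≤ enorm8 δ := enorm8_nonneg δ
  have e1 : 0 ≤ enorm8 (A₂⁻¹ *ᵥ w) := enorm8_nonneg _
  calc enorm8 (A₁⁻¹ *ᵥ (Matrix.diagonal δ *ᵥ (A₂⁻¹ *ᵥ w)))
      ≤ (1 / c) * enorm8 (Matrix.diagonal δ *ᵥ (A₂⁻¹ *ᵥ w)) := b1
    _ ≤ (1 / c) * (enorm8 δ * enorm8 (A₂⁻¹ *ᵥ w)) := by gcongr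
    _ ≤ (1 / c) * (enorm8 δ * ((1 / c) * enorm8 w)) := by gcongr
    _ ≤ (1 / c) * (enorm8 δ * ((1 / c) * (C₂ * enorm8 δ))) := by gcongr
    _ = (C₂ / c ^ 2) * enorm8 δ ^ 2 := by field_simp
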